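/- arXiv:2208.12096 — 2 statements merged into one kernel-verified Lean document; each statement's English description precedes it below -/
import Mathlib

section
/- Let Q ⊆ H be a set of histories no element of which is a strict extension of another. Fix a player i ∈ I, a strategy profile σ, a stage n ∈ ℕ with n ≥ 2, and a stopping time θ : 𝓡 → ℕ ∪ {∞} adapted to the filtration (𝓕^n)_{n∈ℕ} generated by finite prefixes. For a history h and action a_i ∈ A_i, define Λ_i(h,a_i) := Σ_{a_{-i}∈A_{-i}, s∈S : (h,(a_i,a_{-i}),s)∈Q} σ_{-i}(a_{-i} | h) · p(s | s_h, a_i, a_{-i}); for a run r = (s¹,a¹,s²,a²,…) and ℓ ∈ ℕ ∪ {∞}, define ζ_i(r,n,ℓ) := Σ_{k=n}^{ℓ} Λ_i(r^{k−1}, a_i^k) if n ≤ ℓ and ζ_i(r,n,ℓ) := 0 otherwise, where r^k denotes the prefix of r in stage k. Then E_σ[ζ_i(r,n,θ(r))] = P_σ(r^k ∈ Q for some k ∈ {n, n+1, …, θ(r)}). -/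
open scoped ENNReal NNReal Classical

/-- A multiplayer stochastic game: a nonempty finite set of players `I`, a nonempty
countable set of states `S`, nonempty finite action sets `A i`, a transition function
`trans` and bounded Borel payoff functions `payoff i` on runs. -/
structure StochGame where
  I : Type
  S : Type
  A : I → Type
  [fintypeI : Fintype I]
  [nonemptyI : Nonempty I]
  [countableS : Countable S]
  [nonemptyS : Nonempty S]
  [fintypeA : ∀ i, Fintype (A i)]
  [nonemptyA : ∀ i, Nonempty (A i)]
  trans : S → (∀ i, A i) → PMF S
  payoff : I → S × (ℕ → (∀ i, A i) × S) → ℝ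

open MeasureTheory

attribute [instance] StochGame.fintypeI StochGame.nonemptyI StochGame.countableS
  StochGame.nonemptyS StochGame.fintypeA StochGame.nonemptyA

namespace StochGame

variable (G : StochGame)

noncomputable instance : DecidableEq G.I := Classical.decEq _

noncomputable instance (i : G.I) : DecidableEq (G.A i) := Classical.decEq _

/-- Action profiles. -/
abbrev ActionProfile := ∀ i, G.A i

/-- Runs `(s¹,a¹,s²,a²,…)`, encoded as an initial state together with a sequence of
(action profile, next state) pairs. -/
abbrev Run := G.S × (ℕ → G.ActionProfile × G.S)

/-- Histories `(s¹,a¹,…,s^n)`, encoded as an initial state together with a finite list of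
(action profile, next state) pairs. -/
abbrev History := G.S × List (G.ActionProfile × G.S)

instance : MeasurableSpace G.S := ⊤
instance : MeasurableSpace G.ActionProfile := ⊤

variable {G}

/-- The final state `s_h` of a history. -/
def lastState (h : G.History) : G.S := h.2.getLast?.elim h.1 Prod.snd

/-- The stage (length) of a history: a history `(s¹,a¹,…,s^n)` is in stage `n`. -/
def stage (h : G.History) : ℕ := h.2.length + 1

/-- The history obtained by appending one action profile and one state. -/
def snocH (h : G.History) (a : G.ActionProfile) (s : G.S) : G.History :=
  (h.1, h.2 ++ [(a, s)])

/-- The history obtained by appending a finite list of (action profile, state) pairs. -/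
def catH (h : G.History) (l : List (G.ActionProfile × G.S)) : G.History := (h.1, h.2 ++ l)

/-- The history in stage 1 consisting of the initial state `s` only. -/
def initH (G : StochGame) (s : G.S) : G.History := (s, [])

/-- All transitions along the list have positive probability when starting from `s`. -/
def ValidFrom (G : StochGame) : G.S → List (G.ActionProfile × G.S) → Prop
  | _, [] => True
  | s, (a, t) :: l => G.trans s a t ≠ 0 ∧ ValidFrom G t l

/-- A history belongs to the set `H` of histories of the game iff all its transitions have
positive probability. -/
def Valid (h : G.History) : Prop := ValidFrom G h.1 h.2

/-- `Ext h h'` means that the history `h'` extends the history `h` (possibly `h = h'`),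
written `h ⪯ h'` in the paper. -/
def Ext (h h' : G.History) : Prop := h.1 = h'.1 ∧ h.2 <+: h'.2

/-- A behavior strategy of player `i`: a mixed action at every history. -/
abbrev Strategy (G : StochGame) (i : G.I) := G.History → PMF (G.A i)

/-- A strategy profile: one behavior strategy for each player. -/
abbrev Profile (G : StochGame) := ∀ i, G.Strategy i

/-- The probability, under the strategy profile `σ`, that after the history `h` play continues
exactly along the finite continuation `l`. -/
noncomputable def contProb (σ : G.Profile) : G.History → List (G.ActionProfile × G.S) → ℝ≥0∞
  | _, [] => 1
  | h, (a, s) :: l =>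
      (∏ i, σ i h (a i)) * G.trans (lastState h) a s * contProb σ (snocH h a s) l

/-- The cylinder set `C(h)` of all runs extending the history `h`. -/
def cyl (h : G.History) : Set G.Run :=
  {r | r.1 = h.1 ∧ ∀ k, (hk : k < h.2.length) → r.2 k = h.2.get ⟨k, hk⟩}

/-- `P` is the family of probability measures `P_{h,σ}` on runs induced, via the
Ionescu-Tulcea/Kolmogorov extension, by a history `h` and a strategy profile `σ`:
each `P h σ` is a probability measure, and the measure of the cylinder set of any finite
extension of `h` is the product of the transition probabilities prescribed by `σ` and `p`.
(These properties determine `P h σ` uniquely, since `P h σ (cyl h) = 1`.) -/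
def IsInducedFamily (G : StochGame) (P : G.History → G.Profile → Measure G.Run) : Prop :=
  (∀ h σ, IsProbabilityMeasure (P h σ)) ∧
    ∀ (h : G.History) (σ : G.Profile) (l : List (G.ActionProfile × G.S)),
      P h σ (cyl (catH h l)) = contProb σ h l

/-- The expected payoff `E_{h,σ}[f_i]` of player `i` in the subgame at `h` under `σ`. -/
noncomputable def expPay (P : G.History → G.Profile → Measure G.Run) (h : G.History)
    (σ : G.Profile) (i : G.I) : ℝ :=
  ∫ r, G.payoff i r ∂(P h σ)

/-- The minmax value `v̄_i(h)` of player `i` at the history `h`. -/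
noncomputable def minmaxVal (P : G.History → G.Profile → Measure G.Run) (i : G.I)
    (h : G.History) : ℝ :=
  ⨅ σ : G.Profile, ⨆ τ : G.Strategy i, expPay P h (Function.update σ i τ) i

/-- The maxmin value `v̲_i(h)` of player `i` at the history `h`. -/
noncomputable def maxminVal (P : G.History → G.Profile → Measure G.Run) (i : G.I)
    (h : G.History) : ℝ :=
  ⨆ τ : G.Strategy i, ⨅ σ : G.Profile, expPay P h (Function.update σ i τ) i

/-- `E[D | h, x]`: the expected value of `D` at the next history, when at history `h` the
players use the mixed action profile `x` and the next state is drawn according to `p`. -/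
noncomputable def oneShotExp (D : G.History → ℝ) (h : G.History) (x : ∀ i, PMF (G.A i)) : ℝ :=
  ∑ a : G.ActionProfile, (∏ i, (x i (a i)).toReal) *
    ∑' s : G.S, (G.trans (lastState h) a s).toReal * D (snocH h a s)

/-- The minmax value `v̄_{O,i}(D,h)` of player `i` in the one-shot game `G_O(D,h)`. -/
noncomputable def oneShotMinmax (D : G.History → ℝ) (i : G.I) (h : G.History) : ℝ :=
  ⨅ x : ∀ j, PMF (G.A j), ⨆ y : PMF (G.A i), oneShotExp D h (Function.update x i y)

/-- The maxmin value `v̲_{O,i}(D,h)` of player `i` in the one-shot game `G_O(D,h)`. -/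
noncomputable def oneShotMaxmin (D : G.History → ℝ) (i : G.I) (h : G.History) : ℝ :=
  ⨆ y : PMF (G.A i), ⨅ x : ∀ j, PMF (G.A j), oneShotExp D h (Function.update x i y)

end StochGame

namespace StochGame

variable {G : StochGame}

/-- The prefix `r^k` of a run `r` in stage `k`: the history `(s¹,a¹,…,s^k)`. -/
def prefixRun (r : G.Run) (k : ℕ) : G.History :=
  (r.1, List.ofFn fun j : Fin (k - 1) => r.2 j)

/-- The σ-algebra `𝓕^n` on runs generated by the cylinder sets of histories in stage `n`,
i.e. by the prefix in stage `n`. -/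
def filt (G : StochGame) (n : ℕ) : MeasurableSpace G.Run :=
  MeasurableSpace.comap (fun r : G.Run => prefixRun r n) ⊤

end StochGame

namespace StochGame

variable {G : StochGame}

/-- `Λ_i(h, a_i)`: the probability that the history in the next stage lies in `Q`, when at
the history `h` player `i` selects the action `a_i` and her opponents play according to
`σ_{-i}(h)`. -/
noncomputable def lam (Q : Set G.History) (σ : G.Profile) (i : G.I) (h : G.History)
    (ai : G.A i) : ℝ≥0∞ :=
  ∑ a : G.ActionProfile, if a i = ai then
      (∏ j ∈ Finset.univ.erase i, σ j h (a j)) *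
        ∑' s : G.S, (if snocH h a s ∈ Q then G.trans (lastState h) a s else 0)
    else 0

/-- `ζ_i(r, n, ℓ) = Σ_{k=n}^{ℓ} Λ_i(r^{k-1}, a_i^k)`: the fictitious probability that the
run `r` could have reached a history in `Q` at one of the stages `n, …, ℓ`, where the
`k`-th term is `Λ_i` evaluated at the prefix of `r` in stage `k-1` together with the action
that player `i` took there (extending `r^{k-1}` to `r^k`). -/
noncomputable def zeta (Q : Set G.History) (σ : G.Profile) (i : G.I) (r : G.Run) (n : ℕ)
    (l : ℕ∞) : ℝ≥0∞ :=
  ∑' k : ℕ, if n ≤ k ∧ (k : ℕ∞) ≤ l then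
      lam Q σ i (prefixRun r (k - 1)) ((r.2 (k - 2)).1 i)
    else 0


section Aux

variable {G : StochGame}

instance : MeasurableSingletonClass G.S :=
  ⟨fun _ => MeasurableSpace.measurableSet_top⟩

instance : MeasurableSingletonClass G.ActionProfile :=
  ⟨fun _ => MeasurableSpace.measurableSet_top⟩

/-- The statistic of a run in stage `k`: initial state and first `k-1` transitions. -/
def stat (k : ℕ) (r : G.Run) : G.S × (Fin (k - 1) → G.ActionProfile × G.S) :=
  (r.1, fun j => r.2 j)

lemma measurable_stat (k : ℕ) : Measurable (stat (G := G) k) :=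
  measurable_fst.prodMk <|
    measurable_pi_lambda _ fun _ => (measurable_pi_apply _).comp measurable_snd

lemma prefixRun_eq_stat (r : G.Run) (k : ℕ) :
    prefixRun r k = ((stat k r).1, List.ofFn (stat k r).2) := rfl

lemma stat_mono {k m : ℕ} (hmk : m ≤ k) {r r' : G.Run} (h : stat k r = stat k r') :
    stat m r = stat m r' := by
  rw [Prod.ext_iff] at h ⊢
  refine ⟨h.1, funext fun j => ?_⟩
  have hj : (j : ℕ) < k - 1 := lt_of_lt_of_le j.2 (Nat.sub_le_sub_right hmk 1)
  exact congrFun h.2 ⟨j, hj⟩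

lemma prefixRun_congr {k m : ℕ} (hmk : m ≤ k) {r r' : G.Run} (h : stat k r = stat k r') :
    prefixRun r m = prefixRun r' m := by
  rw [prefixRun_eq_stat, prefixRun_eq_stat, stat_mono hmk h]

/-- A canonical run with a given statistic. -/
noncomputable def sec (k : ℕ) (x : G.S × (Fin (k - 1) → G.ActionProfile × G.S)) : G.Run :=
  (x.1, fun n => if h : n < k - 1 then x.2 ⟨n, h⟩ else Classical.arbitrary _)

lemma stat_sec (k : ℕ) (x : G.S × (Fin (k - 1) → G.ActionProfile × G.S)) :
    stat k (sec k x) = x := by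
  refine Prod.ext rfl (funext fun j => ?_)
  show (sec k x).2 j = x.2 j
  simp only [sec, j.2, dif_pos]

/-- The fiber of the statistic map. -/
def fib (k : ℕ) (x : G.S × (Fin (k - 1) → G.ActionProfile × G.S)) : Set G.Run :=
  stat k ⁻¹' {x}

lemma mem_fib {k : ℕ} {x} {r : G.Run} : r ∈ fib k x ↔ stat k r = x := Iff.rfl

lemma measurableSet_fib (k : ℕ) (x) : MeasurableSet (fib (G := G) k x) :=
  measurable_stat k (measurableSet_singleton x)

end Aux

section Aux2

variable {G : StochGame}

lemma lintegral_eq_tsum_fib (k : ℕ) (μ : MeasureTheory.Measure G.Run) (g : G.Run → ℝ≥0∞)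
    (hg : ∀ r r', stat k r = stat k r' → g r = g r') :
    ∫⁻ r, g r ∂μ = ∑' x, g (sec k x) * μ (fib k x) := by
  have h1 : ∀ r, g r = ∑' x, (fib k x).indicator (fun _ => g (sec k x)) r := by
    intro r
    have h2 : (∑' x, (fib k x).indicator (fun _ => g (sec k x)) r)
        = (fib k (stat k r)).indicator (fun _ => g (sec k (stat k r))) r :=
      tsum_eq_single (stat k r) fun x hx =>
        Set.indicator_of_notMem (show r ∉ fib k x from fun hr => hx (Eq.symm hr)) _
    rw [h2, Set.indicator_of_mem (show r ∈ fib k (stat k r) from rfl)]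
    exact hg _ _ (stat_sec k (stat k r)).symm
  calc ∫⁻ r, g r ∂μ
      = ∫⁻ r, ∑' x, (fib k x).indicator (fun _ => g (sec k x)) r ∂μ :=
        lintegral_congr h1
    _ = ∑' x, ∫⁻ r, (fib k x).indicator (fun _ => g (sec k x)) r ∂μ :=
        lintegral_tsum fun x =>
          (measurable_const.indicator (measurableSet_fib k x)).aemeasurable
    _ = ∑' x, g (sec k x) * μ (fib k x) := by
        refine tsum_congr fun x => ?_
        rw [lintegral_indicator_const (measurableSet_fib k x)]

lemma measure_eq_tsum_fib (k : ℕ) (μ : MeasureTheory.Measure G.Run) (S : Set G.Run)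
    (hS : ∀ r r', stat k r = stat k r' → (r ∈ S ↔ r' ∈ S)) :
    μ S = ∑' x, if sec k x ∈ S then μ (fib k x) else 0 := by
  have hfib : ∀ x, fib k x ∩ S = if sec k x ∈ S then fib k x else ∅ := by
    intro x
    have hiff : ∀ r, r ∈ fib k x → (r ∈ S ↔ sec k x ∈ S) := fun r hr =>
      hS r (sec k x) (hr.trans (stat_sec k x).symm)
    by_cases hx : sec k x ∈ S
    · rw [if_pos hx]
      ext r
      exact ⟨fun hr => hr.1, fun hr => ⟨hr, (hiff r hr).mpr hx⟩⟩
    · rw [if_neg hx]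
      ext r
      exact ⟨fun hr => hx ((hiff r hr.1).mp hr.2), fun hr => absurd hr (Set.notMem_empty r)⟩
  have hun : S = ⋃ x, fib k x ∩ S := by
    ext r
    simp only [Set.mem_iUnion]
    exact ⟨fun h => ⟨stat k r, rfl, h⟩, fun ⟨x, _, h⟩ => h⟩
  have hdisj : Pairwise (Function.onFun Disjoint fun x => fib (G := G) k x ∩ S) := by
    intro x y hxy
    refine Set.disjoint_left.mpr fun r hrx hry => hxy ?_
    exact hrx.1.symm.trans hry.1
  have hmeas : ∀ x, MeasurableSet (fib (G := G) k x ∩ S) := by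
    intro x
    rw [hfib x]
    split_ifs
    · exact measurableSet_fib k x
    · exact MeasurableSet.empty
  have hm := MeasureTheory.measure_iUnion (μ := μ) hdisj hmeas
  rw [← hun] at hm
  rw [hm]
  refine tsum_congr fun x => ?_
  rw [hfib x]
  split_ifs
  · rfl
  · exact MeasureTheory.measure_empty

lemma measurable_factor (k : ℕ) (g : G.Run → ℝ≥0∞)
    (hg : ∀ r r', stat k r = stat k r' → g r = g r') : Measurable g := by
  have h : g = (fun x => g (sec k x)) ∘ stat k :=
    funext fun r => hg _ _ (stat_sec k (stat k r)).symm
  rw [h]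
  exact (measurable_of_countable _).comp (measurable_stat k)

lemma measurableSet_factor (k : ℕ) (S : Set G.Run)
    (hS : ∀ r r', stat k r = stat k r' → (r ∈ S ↔ r' ∈ S)) : MeasurableSet S := by
  have h : S = stat k ⁻¹' (stat k '' S) := by
    ext r
    constructor
    · intro hr
      exact ⟨r, hr, rfl⟩
    · rintro ⟨r', hr', he⟩
      exact (hS r' r he).mp hr'
  rw [h]
  exact measurable_stat k ((Set.to_countable _).measurableSet)

lemma theta_congr {θ : G.Run → ℕ∞}
    (hθ : ∀ m : ℕ, MeasurableSet[G.filt m] {r : G.Run | θ r = (m : ℕ∞)})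
    {m : ℕ} {r r' : G.Run} (h : prefixRun r m = prefixRun r' m) :
    θ r = (m : ℕ∞) ↔ θ r' = (m : ℕ∞) := by
  have h2 : MeasurableSet[MeasurableSpace.comap (fun r : G.Run => prefixRun r m) ⊤]
      {r : G.Run | θ r = (m : ℕ∞)} := hθ m
  rw [MeasurableSpace.measurableSet_comap] at h2
  obtain ⟨T, -, hT⟩ := h2
  have key : ∀ r r' : G.Run, prefixRun r m = prefixRun r' m →
      θ r = (m : ℕ∞) → θ r' = (m : ℕ∞) := by
    intro r r' he hr
    have h3 : r ∈ (fun r : G.Run => prefixRun r m) ⁻¹' T := by rw [hT]; exact hr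
    have h4 : r' ∈ (fun r : G.Run => prefixRun r m) ⁻¹' T := by
      simp only [Set.mem_preimage] at h3 ⊢
      rw [← he]; exact h3
    rw [hT] at h4
    exact h4
  exact ⟨key r r' h, key r' r h.symm⟩

lemma le_theta_congr {θ : G.Run → ℕ∞}
    (hθ : ∀ m : ℕ, MeasurableSet[G.filt m] {r : G.Run | θ r = (m : ℕ∞)})
    {k k' : ℕ} (hkk : k' ≤ k + 1) {r r' : G.Run} (h : stat k r = stat k r') :
    ((k' : ℕ∞) ≤ θ r ↔ (k' : ℕ∞) ≤ θ r') := by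
  have key : ∀ m : ℕ, m < k' → (θ r = (m : ℕ∞) ↔ θ r' = (m : ℕ∞)) := fun m hm =>
    theta_congr hθ (prefixRun_congr (by omega) h)
  have iff1 : ∀ t : ℕ∞, ((k' : ℕ∞) ≤ t ↔ ∀ m : ℕ, m < k' → t ≠ (m : ℕ∞)) := by
    intro t
    induction t using ENat.recTopCoe with
    | top => simp
    | coe t =>
      simp only [Nat.cast_le, ne_eq, Nat.cast_inj]
      exact ⟨fun h m hm hm' => by omega, fun h => le_of_not_gt fun hl => h t hl rfl⟩
  rw [iff1, iff1]
  exact forall_congr' fun m => imp_congr_right fun hm => not_congr (key m hm)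

end Aux2

section Aux3

variable {G : StochGame}

lemma contProb_append (σ : G.Profile) (h : G.History) (l l' : List (G.ActionProfile × G.S)) :
    contProb σ h (l ++ l') = contProb σ h l * contProb σ (catH h l) l' := by
  induction l generalizing h with
  | nil =>
    have hc : catH h ([] : List (G.ActionProfile × G.S)) = h := by
      simp [catH]
    rw [List.nil_append, hc]
    simp [contProb]
  | cons p l ih =>
    obtain ⟨a, s'⟩ := p
    have hcat : catH h ((a, s') :: l) = catH (snocH h a s') l := by
      simp [catH, snocH]
    rw [List.cons_append]
    simp only [contProb]
    rw [ih (snocH h a s'), hcat]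
    ring

lemma measure_fib_eq {P : G.History → G.Profile → MeasureTheory.Measure G.Run}
    (hP : IsInducedFamily G P) (s : G.S) (σ : G.Profile) (k : ℕ)
    (x : G.S × (Fin (k - 1) → G.ActionProfile × G.S)) :
    P (G.initH s) σ (fib k x)
      = if x.1 = s then contProb σ (G.initH s) (List.ofFn x.2) else 0 := by
  haveI : MeasureTheory.IsProbabilityMeasure (P (G.initH s) σ) := hP.1 _ _
  by_cases hx : x.1 = s
  · rw [if_pos hx]
    have hfib : fib k x = cyl (catH (G.initH s) (List.ofFn x.2)) := by
      ext r
      simp only [mem_fib, cyl, catH, initH, Set.mem_setOf_eq, List.nil_append]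
      constructor
      · intro hr
        obtain ⟨h1, h2⟩ := Prod.ext_iff.mp hr
        refine ⟨h1.trans hx, fun jj hjj => ?_⟩
        have hjj' : jj < k - 1 := by simpa using hjj
        rw [List.get_ofFn]
        exact congrFun h2 ⟨jj, hjj'⟩
      · rintro ⟨h1, h2⟩
        refine Prod.ext (h1.trans hx.symm) (funext fun j => ?_)
        have hj : (j : ℕ) < (List.ofFn x.2).length := by simp
        have := h2 j hj
        rw [List.get_ofFn] at this
        exact this
    rw [hfib, hP.2 (G.initH s) σ (List.ofFn x.2)]
  · rw [if_neg hx]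
    have hsub : fib k x ⊆ {r : G.Run | r.1 ≠ s} := by
      intro r hr
      have h1 := (Prod.ext_iff.mp (mem_fib.mp hr)).1
      exact fun hc => hx (h1.symm.trans hc)
    have hcylmeas : MeasurableSet (cyl (G.initH s)) := by
      have hc : cyl (G.initH s) = Prod.fst ⁻¹' {s} := by
        ext r
        simp [cyl, initH]
      rw [hc]
      exact measurable_fst (measurableSet_singleton s)
    have hcylinit : P (G.initH s) σ (cyl (G.initH s)) = 1 := by
      have h0 := hP.2 (G.initH s) σ []
      rw [show catH (G.initH s) [] = G.initH s from rfl] at h0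
      rw [h0]
      rfl
    have hset : {r : G.Run | r.1 ≠ s} = (cyl (G.initH s))ᶜ := by
      ext r
      simp [cyl, initH]
    refine le_antisymm (le_trans (MeasureTheory.measure_mono hsub) ?_) zero_le
    rw [hset, MeasureTheory.measure_compl hcylmeas (MeasureTheory.measure_ne_top _ _),
      hcylinit]
    simp

set_option maxHeartbeats 1000000 in
lemma marg {i : G.I} (g : ∀ j, G.A j → ℝ≥0∞) (hg : ∀ j, ∑ c, g j c = 1) (b : G.A i) :
    (∑ a : G.ActionProfile, if a i = b then ∏ j, g j (a j) else 0) = g i b := by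
  classical
  set D : ∀ j, G.A j → ℝ≥0∞ := fun j c => if h : j = i then (if h ▸ c = b then 1 else 0) else 1
    with hD
  have hDi : ∀ c : G.A i, D i c = if c = b then 1 else 0 := by
    intro c
    simp [hD]
  have hDj : ∀ j, j ≠ i → ∀ c : G.A j, D j c = 1 := fun j hj c => dif_neg hj
  have step1 : ∀ a : G.ActionProfile,
      (if a i = b then ∏ j, g j (a j) else 0) = ∏ j, g j (a j) * D j (a j) := by
    intro a
    rw [Finset.prod_mul_distrib]
    have hprod : ∏ j, D j (a j) = if a i = b then 1 else 0 := by
      rw [Finset.prod_eq_single i (fun j _ hj => hDj j hj (a j))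
        (fun hmem => absurd (Finset.mem_univ i) hmem)]
      exact hDi (a i)
    rw [hprod]
    split_ifs <;> simp
  simp_rw [step1]
  calc ∑ a : G.ActionProfile, ∏ j, g j (a j) * D j (a j)
      = ∏ j, ∑ c, g j c * D j c := (Fintype.prod_sum (fun j c => g j c * D j c)).symm
    _ = g i b := by
        rw [Finset.prod_eq_single i ?_ ?_]
        · simp_rw [hDi]
          simp only [mul_ite, mul_one, mul_zero]
          simp
        · intro j _ hj
          simp_rw [hDj j hj, mul_one]
          exact hg j
        · intro hmem
          exact absurd (Finset.mem_univ i) hmem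

set_option maxHeartbeats 1000000 in
lemma core_sum {Q : Set G.History} {σ : G.Profile} {i : G.I} (h : G.History) :
    ∑ a : G.ActionProfile, (∏ j, σ j h (a j)) * lam Q σ i h (a i)
      = ∑ a : G.ActionProfile, (∏ j, σ j h (a j)) *
          ∑' s', (if snocH h a s' ∈ Q then G.trans (lastState h) a s' else 0) := by
  classical
  have hg : ∀ j, ∑ c, (σ j h) c = 1 := fun j => by
    rw [← tsum_fintype (L := SummationFilter.unconditional _)]
    exact (σ j h).tsum_coe
  set q : G.ActionProfile → ℝ≥0∞ := fun a =>
    ∑' s', (if snocH h a s' ∈ Q then G.trans (lastState h) a s' else 0) with hq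
  set u : G.ActionProfile → ℝ≥0∞ := fun a =>
    (∏ j ∈ Finset.univ.erase i, σ j h (a j)) * q a with hu
  calc ∑ a : G.ActionProfile, (∏ j, σ j h (a j)) * lam Q σ i h (a i)
      = ∑ a : G.ActionProfile, ∑ a' : G.ActionProfile,
          (if a' i = a i then (∏ j, σ j h (a j)) * u a' else 0) := by
        refine Finset.sum_congr rfl fun a _ => ?_
        rw [lam, Finset.mul_sum]
        refine Finset.sum_congr rfl fun a' _ => ?_
        rw [mul_ite, mul_zero]
    _ = ∑ a' : G.ActionProfile, u a' *
          ∑ a : G.ActionProfile, (if a i = a' i then ∏ j, σ j h (a j) else 0) := by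
        rw [Finset.sum_comm]
        refine Finset.sum_congr rfl fun a' _ => ?_
        rw [Finset.mul_sum]
        refine Finset.sum_congr rfl fun a _ => ?_
        rw [mul_ite, mul_zero, mul_comm]
        congr 1
        exact propext ⟨Eq.symm, Eq.symm⟩
    _ = ∑ a' : G.ActionProfile, u a' * σ i h (a' i) := by
        refine Finset.sum_congr rfl fun a' _ => ?_
        rw [marg _ hg (a' i)]
    _ = ∑ a' : G.ActionProfile, (∏ j, σ j h (a' j)) * q a' := by
        refine Finset.sum_congr rfl fun a' _ => ?_
        rw [← Finset.mul_prod_erase Finset.univ _ (Finset.mem_univ i), hu]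
        ring

lemma ofFn_snoc {m : ℕ} {B : Type*} (f : Fin m → B) (p : B) :
    List.ofFn (Fin.snoc f p : Fin (m + 1) → B) = List.ofFn f ++ [p] := by
  rw [List.ofFn_succ']
  simp [Fin.snoc_castSucc, Fin.snoc_last, List.concat_eq_append]

/-- Splitting off the last coordinate of a tuple. -/
def glueEquiv (m : ℕ) (B : Type*) : ((Fin m → B) × B) ≃ (Fin (m + 1) → B) where
  toFun p := Fin.snoc p.1 p.2
  invFun f := (fun j => f j.castSucc, f (Fin.last m))
  left_inv p := by
    refine Prod.ext (funext fun j => ?_) ?_ <;> simp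
  right_inv f := by
    show Fin.snoc (fun j : Fin m => f j.castSucc) (f (Fin.last m)) = f
    have h : (fun j : Fin m => f j.castSucc) = Fin.init f := rfl
    rw [h]
    exact Fin.snoc_init_self f

@[simp] lemma glueEquiv_apply {m : ℕ} {B : Type*} (f : Fin m → B) (p : B) :
    glueEquiv m B (f, p) = Fin.snoc f p := rfl

end Aux3



/-- **Theorem (the expectation of `ζ_i` is the probability of reaching `Q`).**
Let `Q ⊆ H` be a set of histories, none of which is a strict extension of another, let `σ`
be a strategy profile, `n ≥ 2`, and let `θ` be a stopping time adapted to the filtration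
`(𝓕^m)_m`. Then `E_σ[ζ_i(r, n, θ(r))]` equals the probability under `σ` that the run
reaches a history in `Q` at one of the stages `n, …, θ(r)`. -/
theorem lintegral_zeta_eq_prob_reach (G : StochGame)
    (P : G.History → G.Profile → Measure G.Run) (hP : IsInducedFamily G P)
    (s : G.S) (Q : Set G.History) (hQH : ∀ h ∈ Q, Valid h)
    (hQanti : ∀ h ∈ Q, ∀ h' ∈ Q, Ext h h' → h = h')
    (i : G.I) (σ : G.Profile) (n : ℕ) (hn : 2 ≤ n)
    (θ : G.Run → ℕ∞)
    (hθ : ∀ m : ℕ, MeasurableSet[G.filt m] {r : G.Run | θ r = (m : ℕ∞)}) :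
    ∫⁻ r, zeta Q σ i r n (θ r) ∂(P (G.initH s) σ)
      = P (G.initH s) σ
          {r : G.Run | ∃ k : ℕ, n ≤ k ∧ (k : ℕ∞) ≤ θ r ∧ prefixRun r k ∈ Q} := by
  classical
  haveI : MeasureTheory.IsProbabilityMeasure (P (G.initH s) σ) := hP.1 _ _
  set μ := P (G.initH s) σ with hμdef
  set term : ℕ → G.Run → ℝ≥0∞ := fun k r =>
    if n ≤ k ∧ (k : ℕ∞) ≤ θ r then lam Q σ i (prefixRun r (k - 1)) ((r.2 (k - 2)).1 i) else 0
    with htermdef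
  set E : ℕ → Set G.Run := fun k =>
    {r : G.Run | n ≤ k ∧ (k : ℕ∞) ≤ θ r ∧ prefixRun r k ∈ Q} with hEdef
  -- the `k`-th summand of `ζ` only depends on the statistic in stage `k`
  have hterm_fac : ∀ k (r r' : G.Run), stat k r = stat k r' → term k r = term k r' := by
    intro k r r' hrr
    simp only [htermdef]
    by_cases hnk : n ≤ k
    · have hθiff := le_theta_congr hθ (Nat.le_succ k) hrr
      have hpre : prefixRun r (k - 1) = prefixRun r' (k - 1) :=
        prefixRun_congr (Nat.sub_le k 1) hrr
      have hact : r.2 (k - 2) = r'.2 (k - 2) := by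
        have hk2 : 2 ≤ k := le_trans hn hnk
        have hlt : k - 2 < k - 1 := by omega
        exact congrFun (Prod.ext_iff.mp hrr).2 ⟨k - 2, hlt⟩
      rw [hpre, hact]
      by_cases hθk : (k : ℕ∞) ≤ θ r
      · rw [if_pos ⟨hnk, hθk⟩, if_pos ⟨hnk, hθiff.mp hθk⟩]
      · rw [if_neg fun hc => hθk hc.2, if_neg fun hc => hθk (hθiff.mpr hc.2)]
    · rw [if_neg fun hc => hnk hc.1, if_neg fun hc => hnk hc.1]
  -- the event `E k` only depends on the statistic in stage `k`
  have hE_fac : ∀ k (r r' : G.Run), stat k r = stat k r' → (r ∈ E k ↔ r' ∈ E k) := by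
    intro k r r' hrr
    have hθiff := le_theta_congr hθ (Nat.le_succ k) hrr
    have hpre : prefixRun r k = prefixRun r' k := prefixRun_congr le_rfl hrr
    simp only [hEdef, Set.mem_setOf_eq, hpre]
    exact and_congr Iff.rfl (and_congr hθiff Iff.rfl)
  -- Step 1 : the integral of `ζ` is the sum of the integrals of its summands
  have step1 : ∫⁻ r, zeta Q σ i r n (θ r) ∂μ = ∑' k : ℕ, ∫⁻ r, term k r ∂μ := by
    have hz : ∀ r, zeta Q σ i r n (θ r) = ∑' k : ℕ, term k r := fun r => rfl
    rw [lintegral_congr hz]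
    exact lintegral_tsum fun k => (measurable_factor k _ (hterm_fac k)).aemeasurable
  -- Step 2 : the events `E k` are pairwise disjoint (since `Q` is an antichain)
  have hEdisj : Pairwise (Function.onFun Disjoint E) := by
    have key : ∀ k l : ℕ, k < l → ∀ r : G.Run, r ∈ E k → r ∈ E l → False := by
      intro k l hkl r hrk hrl
      obtain ⟨hnk, -, hQk⟩ := hrk
      obtain ⟨hnl, -, hQl⟩ := hrl
      have hkl1 : k - 1 ≤ l - 1 := by omega
      have hpre : (List.ofFn fun j : Fin (k - 1) => r.2 j) <+:
          (List.ofFn fun j : Fin (l - 1) => r.2 j) := by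
        have heq : List.ofFn (Fin.take (k - 1) hkl1 fun j : Fin (l - 1) => r.2 j)
            = List.ofFn fun j : Fin (k - 1) => r.2 j := rfl
        rw [← heq, Fin.ofFn_take_eq_take_ofFn]
        exact List.take_prefix _ _
      have hext : Ext (prefixRun r k) (prefixRun r l) := ⟨rfl, hpre⟩
      have heq2 := hQanti _ hQk _ hQl hext
      have hlen := congrArg (fun h : G.History => h.2.length) heq2
      simp only [prefixRun, List.length_ofFn] at hlen
      omega
    intro k l hkl
    rcases Nat.lt_or_ge k l with h | h
    · exact Set.disjoint_left.mpr fun r hrk hrl => key k l h r hrk hrl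
    · have hlk : l < k := by omega
      exact Set.disjoint_left.mpr fun r hrk hrl => key l k hlk r hrl hrk
  have step2 : μ {r : G.Run | ∃ k : ℕ, n ≤ k ∧ (k : ℕ∞) ≤ θ r ∧ prefixRun r k ∈ Q}
      = ∑' k : ℕ, μ (E k) := by
    have hset : {r : G.Run | ∃ k : ℕ, n ≤ k ∧ (k : ℕ∞) ≤ θ r ∧ prefixRun r k ∈ Q}
        = ⋃ k, E k := by
      ext r
      simp only [Set.mem_iUnion]
      exact Iff.rfl
    rw [hset]
    exact MeasureTheory.measure_iUnion hEdisj fun k => measurableSet_factor k _ (hE_fac k)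
  -- Step 3 : the integral of the `k`-th summand equals the measure of `E k`
  have step3 : ∀ k : ℕ, n ≤ k → ∫⁻ r, term k r ∂μ = μ (E k) := by
    intro k hnk
    obtain ⟨m, rfl⟩ : ∃ m, k = m + 2 := ⟨k - 2, by omega⟩
    rw [lintegral_eq_tsum_fib (m + 2) μ _ (hterm_fac (m + 2)),
      measure_eq_tsum_fib (m + 2) μ _ (hE_fac (m + 2))]
    have h21 : m + 2 - 1 = m + 1 := rfl
    have h22 : m + 2 - 2 = m := rfl
    set B := G.ActionProfile × G.S with hBdef
    set eqv : (G.S × ((Fin m → B) × B)) ≃ (G.S × (Fin (m + 1) → B)) :=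
      (Equiv.refl G.S).prodCongr (glueEquiv m B) with heqvdef
    refine Eq.trans (Equiv.tsum_eq eqv _).symm (Eq.trans ?_ (Equiv.tsum_eq eqv _))
    refine Eq.trans ENNReal.tsum_prod' (Eq.trans ?_ ENNReal.tsum_prod'.symm)
    refine tsum_congr fun s₀ => ?_
    refine Eq.trans ENNReal.tsum_prod' (Eq.trans ?_ ENNReal.tsum_prod'.symm)
    refine tsum_congr fun f => ?_
    simp only [heqvdef, Equiv.prodCongr_apply, Equiv.coe_refl, id_eq, glueEquiv_apply]
    refine Eq.trans ENNReal.tsum_prod' (Eq.trans ?_ ENNReal.tsum_prod'.symm)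
    refine Eq.trans (tsum_fintype _) (Eq.trans ?_ (tsum_fintype _).symm)
    dsimp only [Prod.map_apply, id_eq, glueEquiv_apply]
    -- now we sum over the action profile `a` and the new state `s'`
    by_cases hs : s₀ = s
    · subst hs
      have hstat1 : ∀ (a : G.ActionProfile) (s' : G.S),
          stat (m + 1) (sec (m + 2) (s₀, Fin.snoc f (a, s'))) = (s₀, f) := by
        intro a s'
        refine Prod.ext rfl (funext fun j => ?_)
        show (sec (m + 2) (s₀, Fin.snoc f (a, s'))).2 j = f j
        have hj : (j : ℕ) < m + 2 - 1 := lt_trans j.2 (Nat.lt_succ_self m)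
        simp only [sec]
        rw [dif_pos hj]
        exact Fin.snoc_castSucc _ _ j
      have hpre1 : ∀ (a : G.ActionProfile) (s' : G.S),
          prefixRun (sec (m + 2) (s₀, Fin.snoc f (a, s'))) (m + 2 - 1) = (s₀, List.ofFn f) := by
        intro a s'
        show prefixRun (sec (m + 2) (s₀, Fin.snoc f (a, s'))) (m + 1) = (s₀, List.ofFn f)
        rw [prefixRun_eq_stat, hstat1 a s']
      have hpre2 : ∀ (a : G.ActionProfile) (s' : G.S),
          prefixRun (sec (m + 2) (s₀, Fin.snoc f (a, s'))) (m + 2)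
            = snocH (s₀, List.ofFn f) a s' := by
        intro a s'
        rw [prefixRun_eq_stat, stat_sec]
        show ((s₀ : G.S), List.ofFn (Fin.snoc f (a, s'))) = _
        rw [ofFn_snoc]
        rfl
      have hact : ∀ (a : G.ActionProfile) (s' : G.S),
          (sec (m + 2) (s₀, Fin.snoc f (a, s'))).2 (m + 2 - 2) = (a, s') := by
        intro a s'
        show (sec (m + 2) (s₀, Fin.snoc f (a, s'))).2 m = (a, s')
        have hm : m < m + 2 - 1 := Nat.lt_succ_self m
        simp only [sec]
        rw [dif_pos hm]
        exact Fin.snoc_last _ _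
      have hθiff : ∀ (a : G.ActionProfile) (s' : G.S),
          (((m + 2 : ℕ) : ℕ∞) ≤ θ (sec (m + 2) (s₀, Fin.snoc f (a, s'))) ↔
            ((m + 2 : ℕ) : ℕ∞) ≤ θ (sec (m + 1) (s₀, f))) := fun a s' =>
        le_theta_congr hθ (by omega) ((hstat1 a s').trans (stat_sec (m + 1) (s₀, f)).symm)
      have hμfib : ∀ (a : G.ActionProfile) (s' : G.S),
          μ (fib (m + 2) ((s₀ : G.S), Fin.snoc f (a, s')))
            = contProb σ (G.initH s₀) (List.ofFn f) *
              ((∏ j, σ j (s₀, List.ofFn f) (a j)) *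
                G.trans (lastState ((s₀ : G.S), List.ofFn f)) a s') := by
        intro a s'
        rw [hμdef, measure_fib_eq hP s₀ σ (m + 2) ((s₀ : G.S), Fin.snoc f (a, s')), if_pos rfl]
        show contProb σ (G.initH s₀) (List.ofFn (Fin.snoc f (a, s'))) = _
        rw [ofFn_snoc, contProb_append]
        have hcat : catH (G.initH s₀) (List.ofFn f) = ((s₀ : G.S), List.ofFn f) := rfl
        rw [hcat]
        simp only [contProb]
        ring
      by_cases hInd : ((m + 2 : ℕ) : ℕ∞) ≤ θ (sec (m + 1) ((s₀ : G.S), f))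
      · -- the stopping-time condition holds on this cylinder
        have hterm_eq : ∀ (a : G.ActionProfile) (s' : G.S),
            term (m + 2) (sec (m + 2) (s₀, Fin.snoc f (a, s')))
              = lam Q σ i ((s₀ : G.S), List.ofFn f) (a i) := by
          intro a s'
          simp only [htermdef]
          rw [if_pos ⟨hnk, (hθiff a s').mpr hInd⟩, hpre1 a s', hact a s']
        have hE_iff : ∀ (a : G.ActionProfile) (s' : G.S),
            (sec (m + 2) (s₀, Fin.snoc f (a, s')) ∈ E (m + 2)) ↔
              snocH ((s₀ : G.S), List.ofFn f) a s' ∈ Q := by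
          intro a s'
          simp only [hEdef, Set.mem_setOf_eq]
          rw [hpre2 a s']
          exact ⟨fun hc => hc.2.2, fun hq => ⟨hnk, (hθiff a s').mpr hInd, hq⟩⟩
        have hRHS : ∀ (a : G.ActionProfile) (s' : G.S),
            (if sec (m + 2) (s₀, Fin.snoc f (a, s')) ∈ E (m + 2)
                then μ (fib (m + 2) ((s₀ : G.S), Fin.snoc f (a, s'))) else 0)
              = if snocH ((s₀ : G.S), List.ofFn f) a s' ∈ Q
                then μ (fib (m + 2) ((s₀ : G.S), Fin.snoc f (a, s'))) else 0 := by
          intro a s'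
          by_cases hq : snocH ((s₀ : G.S), List.ofFn f) a s' ∈ Q
          · rw [if_pos ((hE_iff a s').mpr hq), if_pos hq]
          · rw [if_neg (fun hc => hq ((hE_iff a s').mp hc)), if_neg hq]
        refine Eq.trans ?_ (Finset.sum_congr rfl fun a _ => tsum_congr fun s' => hRHS a s').symm
        simp only [hterm_eq, hμfib]
        set hy : G.History := ((s₀ : G.S), List.ofFn f) with hhy
        set C : ℝ≥0∞ := contProb σ (G.initH s₀) (List.ofFn f) with hC
        calc ∑ a : G.ActionProfile, ∑' s' : G.S, lam Q σ i hy (a i) *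
                (C * ((∏ j, σ j hy (a j)) * G.trans (lastState hy) a s'))
            = ∑ a : G.ActionProfile, ((∏ j, σ j hy (a j)) * lam Q σ i hy (a i)) * C := by
              refine Finset.sum_congr rfl fun a _ => ?_
              have hre : ∀ s' : G.S, lam Q σ i hy (a i) *
                    (C * ((∏ j, σ j hy (a j)) * G.trans (lastState hy) a s'))
                  = (((∏ j, σ j hy (a j)) * lam Q σ i hy (a i)) * C) *
                      G.trans (lastState hy) a s' := fun s' => by ring
              rw [tsum_congr hre, ENNReal.tsum_mul_left, (G.trans (lastState hy) a).tsum_coe,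
                mul_one]
          _ = (∑ a : G.ActionProfile, (∏ j, σ j hy (a j)) * lam Q σ i hy (a i)) * C :=
              (Finset.sum_mul _ _ _).symm
          _ = (∑ a : G.ActionProfile, (∏ j, σ j hy (a j)) *
                ∑' s' : G.S, (if snocH hy a s' ∈ Q then G.trans (lastState hy) a s' else 0)) * C := by
              rw [core_sum hy]
          _ = ∑ a : G.ActionProfile, ∑' s' : G.S, (if snocH hy a s' ∈ Q
                then C * ((∏ j, σ j hy (a j)) * G.trans (lastState hy) a s') else 0) := by
              rw [Finset.sum_mul]
              refine Finset.sum_congr rfl fun a _ => ?_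
              have hre : ∀ s' : G.S, (if snocH hy a s' ∈ Q
                    then C * ((∏ j, σ j hy (a j)) * G.trans (lastState hy) a s') else 0)
                  = ((∏ j, σ j hy (a j)) * C) *
                      (if snocH hy a s' ∈ Q then G.trans (lastState hy) a s' else 0) := by
                intro s'
                split_ifs <;> ring
              rw [tsum_congr hre, ENNReal.tsum_mul_left]
              ring
      · -- the stopping-time condition fails on this cylinder : both sides vanish
        have hterm0 : ∀ (a : G.ActionProfile) (s' : G.S),
            term (m + 2) (sec (m + 2) (s₀, Fin.snoc f (a, s'))) = 0 := by
          intro a s'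
          simp only [htermdef]
          exact if_neg fun hc => hInd ((hθiff a s').mp hc.2)
        have hE0 : ∀ (a : G.ActionProfile) (s' : G.S),
            sec (m + 2) (s₀, Fin.snoc f (a, s')) ∉ E (m + 2) := by
          intro a s' hc
          exact hInd ((hθiff a s').mp hc.2.1)
        have hL : (∑ a : G.ActionProfile, ∑' s' : G.S,
            term (m + 2) (sec (m + 2) (s₀, Fin.snoc f (a, s'))) *
              μ (fib (m + 2) ((s₀ : G.S), Fin.snoc f (a, s')))) = 0 := by
          refine Finset.sum_eq_zero fun a _ => ?_
          refine ENNReal.tsum_eq_zero.mpr fun s' => ?_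
          rw [hterm0 a s', zero_mul]
        have hR : (∑ a : G.ActionProfile, ∑' s' : G.S,
            (if sec (m + 2) (s₀, Fin.snoc f (a, s')) ∈ E (m + 2)
              then μ (fib (m + 2) ((s₀ : G.S), Fin.snoc f (a, s'))) else 0)) = 0 := by
          refine Finset.sum_eq_zero fun a _ => ?_
          exact ENNReal.tsum_eq_zero.mpr fun s' => if_neg (hE0 a s')
        exact hL.trans hR.symm
    · -- the initial state does not match : the fibers are null
      have hz : ∀ (a : G.ActionProfile) (s' : G.S),
          μ (fib (m + 2) ((s₀ : G.S), Fin.snoc f (a, s'))) = 0 := by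
        intro a s'
        rw [hμdef, measure_fib_eq hP s σ (m + 2) ((s₀ : G.S), Fin.snoc f (a, s')), if_neg hs]
      have hL : (∑ a : G.ActionProfile, ∑' s' : G.S,
          term (m + 2) (sec (m + 2) (s₀, Fin.snoc f (a, s'))) *
            μ (fib (m + 2) ((s₀ : G.S), Fin.snoc f (a, s')))) = 0 := by
        refine Finset.sum_eq_zero fun a _ => ?_
        refine ENNReal.tsum_eq_zero.mpr fun s' => ?_
        rw [hz a s', mul_zero]
      have hR : (∑ a : G.ActionProfile, ∑' s' : G.S,
          (if sec (m + 2) (s₀, Fin.snoc f (a, s')) ∈ E (m + 2)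
            then μ (fib (m + 2) ((s₀ : G.S), Fin.snoc f (a, s'))) else 0)) = 0 := by
        refine Finset.sum_eq_zero fun a _ => ?_
        refine ENNReal.tsum_eq_zero.mpr fun s' => ?_
        rw [hz a s']
        split_ifs <;> rfl
      exact hL.trans hR.symm
  -- Conclusion
  rw [step1, step2]
  refine tsum_congr fun k => ?_
  by_cases hnk : n ≤ k
  · exact step3 k hnk
  · have h1 : ∀ r : G.Run, term k r = 0 := fun r => if_neg fun hc => hnk hc.1
    have h2 : E k = ∅ :=
      Set.eq_empty_iff_forall_notMem.mpr fun r hr => hnk hr.1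
    rw [h2, MeasureTheory.measure_empty]
    simp only [h1, MeasureTheory.lintegral_zero]

end StochGame
end

section
/- Let δ > 0, for each player i let D_i^δ be a Martin function for the minmax value, and let σ* be a strategy profile such that σ*(h) is a Nash equilibrium of the one-shot game G_O(D^δ,h) for every history h. Then for every history h ∈ H, every player i ∈ I, and every action a_i ∈ A_i: Σ_{a_{-i}∈A_{-i}} σ*_{-i}(a_{-i} | h) · Σ_{s∈S} p(s | s_h, a_i, a_{-i}) · v̄_i(h, (a_i,a_{-i}), s) ≤ E_{h,σ*}[f_i] + 2δ. (In words: a one-stage deviation to any action, followed by receiving the minmax value at the resulting history, yields at most the on-path payoff plus 2δ.) -/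
open scoped ENNReal NNReal Classical

open MeasureTheory

namespace StochGame

variable {G : StochGame}

/-- `D` is a Martin function with parameter `ε` for player `i` (for the minmax value):
it is bounded; `v̄_i(h) - ε ≤ D h ≤ v̄_i(h)` at every history; `D h ≤ v̄_{O,i}(D,h)` at
every history; and every strategy profile that plays well locally in all the one-shot
games from some history `h'` onwards also plays well globally from `h'` onwards. -/
def IsMartinMinmax (P : G.History → G.Profile → Measure G.Run) (ε : ℝ) (i : G.I)
    (D : G.History → ℝ) : Prop :=
  (∃ C : ℝ, ∀ h : G.History, |D h| ≤ C) ∧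
  (∀ h : G.History, Valid h → minmaxVal P i h - ε ≤ D h ∧ D h ≤ minmaxVal P i h) ∧
  (∀ h : G.History, Valid h → D h ≤ oneShotMinmax D i h) ∧
  (∀ h' : G.History, Valid h' → ∀ σ : G.Profile,
    (∀ h : G.History, Valid h → Ext h' h →
      oneShotMinmax D i h ≤ oneShotExp D h (fun j => σ j h)) →
    (∀ h : G.History, Valid h → Ext h' h →
      oneShotMinmax D i h ≤ expPay P h σ i))

/-- The mixed action profile `x` is a Nash equilibrium of the one-shot game `G_O(D,h)`:
no player `i` can increase `E[D_i | h, ·]` by unilaterally changing her mixed action. -/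
def OneShotNash (D : G.I → G.History → ℝ) (h : G.History) (x : ∀ i, PMF (G.A i)) : Prop :=
  ∀ (i : G.I) (y : PMF (G.A i)),
    oneShotExp (D i) h (Function.update x i y) ≤ oneShotExp (D i) h x

end StochGame

namespace StochGame

variable {G : StochGame}

instance inst_s13 : MeasurableSingletonClass G.S := ⟨fun _ => trivial⟩
instance inst_s13_2 : MeasurableSingletonClass G.ActionProfile := ⟨fun _ => trivial⟩

/-! ### Histories -/

lemma ext_refl (h : G.History) : Ext h h := ⟨rfl, List.prefix_refl _⟩

lemma ext_trans {h₁ h₂ h₃ : G.History} (h12 : Ext h₁ h₂) (h23 : Ext h₂ h₃) : Ext h₁ h₃ :=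
  ⟨h12.1.trans h23.1, h12.2.trans h23.2⟩

lemma ext_snocH (h : G.History) (a : G.ActionProfile) (s : G.S) : Ext h (snocH h a s) :=
  ⟨rfl, List.prefix_append _ _⟩

lemma lastState_pair_cons (s t : G.S) (a : G.ActionProfile) (l : List (G.ActionProfile × G.S)) :
    lastState ((s, (a, t) :: l) : G.History) = lastState ((t, l) : G.History) := by
  cases l with
  | nil => simp [lastState]
  | cons b m =>
    simp only [lastState, List.getLast?_cons_cons]
    cases hq : (b :: m).getLast? with
    | none => simp at hq
    | some q => rfl

lemma validFrom_append_single (a : G.ActionProfile) (s : G.S) :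
    ∀ (l : List (G.ActionProfile × G.S)) (s₁ : G.S), G.ValidFrom s₁ l →
      G.trans (lastState ((s₁, l) : G.History)) a s ≠ 0 →
      G.ValidFrom s₁ (l ++ [(a, s)])
  | [], s₁, _, hne => ⟨by simpa [lastState] using hne, trivial⟩
  | (b, t) :: l, s₁, hval, hne => by
      refine ⟨hval.1, validFrom_append_single a s l t hval.2 ?_⟩
      rwa [← lastState_pair_cons s₁ t b l]

lemma valid_snocH {h : G.History} (hv : Valid h) {a : G.ActionProfile} {s : G.S}
    (hs : G.trans (lastState h) a s ≠ 0) : Valid (snocH h a s) :=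
  validFrom_append_single a s h.2 h.1 hv hs

/-! ### Cylinders -/

lemma mem_cyl {r : G.Run} {g : G.History} :
    r ∈ cyl g ↔ r.1 = g.1 ∧ ∀ k, (hk : k < g.2.length) → r.2 k = g.2[k] := by
  simp [cyl, List.get_eq_getElem]

lemma cyl_anti {h' g : G.History} (hext : Ext h' g) : cyl g ⊆ cyl h' := by
  intro r hr
  rw [mem_cyl] at hr ⊢
  refine ⟨hr.1.trans hext.1.symm, fun k hk => ?_⟩
  have hk' : k < g.2.length := lt_of_lt_of_le hk hext.2.length_le
  rw [hr.2 k hk']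
  exact (hext.2.getElem hk).symm

lemma ext_or_ext_of_mem_cyl {r : G.Run} {g₁ g₂ : G.History}
    (h1 : r ∈ cyl g₁) (h2 : r ∈ cyl g₂) : Ext g₁ g₂ ∨ Ext g₂ g₁ := by
  rw [mem_cyl] at h1 h2
  have hfst : g₁.1 = g₂.1 := h1.1.symm.trans h2.1
  have key : ∀ (p q : G.History), p.2.length ≤ q.2.length →
      (r.1 = p.1 ∧ ∀ k, (hk : k < p.2.length) → r.2 k = p.2[k]) →
      (r.1 = q.1 ∧ ∀ k, (hk : k < q.2.length) → r.2 k = q.2[k]) → p.2 <+: q.2 := by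
    intro p q hlen hp hq
    rw [List.prefix_iff_eq_take]
    refine List.ext_getElem (by simp [hlen]) fun n hn₁ hn₂ => ?_
    rw [List.getElem_take]
    rw [← hp.2 n hn₁]
    exact hq.2 n (lt_of_lt_of_le hn₁ hlen)
  rcases le_total g₁.2.length g₂.2.length with hl | hl
  · exact Or.inl ⟨hfst, key g₁ g₂ hl h1 h2⟩
  · exact Or.inr ⟨hfst.symm, key g₂ g₁ hl h2 h1⟩

lemma cyl_measurable (g : G.History) : MeasurableSet (cyl g) := by
  have heq : cyl g = (Prod.fst ⁻¹' {g.1} : Set G.Run) ∩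
      ⋂ (k : Fin g.2.length), (fun r : G.Run => r.2 k) ⁻¹' {g.2.get k} := by
    ext r
    simp only [cyl, Set.mem_setOf_eq, Set.mem_inter_iff, Set.mem_preimage,
      Set.mem_singleton_iff, Set.mem_iInter]
    exact and_congr Iff.rfl ⟨fun H k => H k.1 k.2, fun H k hk => H ⟨k, hk⟩⟩
  rw [heq]
  exact (measurable_fst (MeasurableSet.singleton _)).inter <| MeasurableSet.iInter fun k =>
    ((measurable_pi_apply _).comp measurable_snd) (MeasurableSet.singleton _)

lemma eval_preimage (k : ℕ) (c : G.ActionProfile × G.S) :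
    {r : G.Run | r.2 k = c} =
      ⋃ (s : G.S) (v : Fin k → G.ActionProfile × G.S),
        cyl ((s, List.ofFn v ++ [c]) : G.History) := by
  ext r
  simp only [Set.mem_setOf_eq, Set.mem_iUnion]
  constructor
  · intro hr
    refine ⟨r.1, fun j => r.2 j, ?_⟩
    rw [mem_cyl]
    refine ⟨rfl, fun m hm => ?_⟩
    have hm' : m < k + 1 := by simpa using hm
    rcases lt_or_eq_of_le (Nat.lt_succ_iff.mp hm') with hmk | hmk
    · rw [List.getElem_append_left (by simpa using hmk), List.getElem_ofFn]
    · subst hmk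
      rw [List.getElem_append_right (by simp)]
      simpa using hr
  · rintro ⟨s, v, hmem⟩
    rw [mem_cyl] at hmem
    have hk : k < (List.ofFn v ++ [c]).length := by simp
    have := hmem.2 k hk
    rw [List.getElem_append_right (by simp)] at this
    simpa using this

/-- The collection of all cylinder sets. -/
def cylSets (G : StochGame) : Set (Set G.Run) := {t | ∃ g : G.History, t = cyl g}

lemma isPiSystem_cylSets : IsPiSystem (cylSets G) := by
  rintro t1 ⟨g1, rfl⟩ t2 ⟨g2, rfl⟩ ⟨r, hr1, hr2⟩
  rcases ext_or_ext_of_mem_cyl hr1 hr2 with hext | hext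
  · exact ⟨g2, Set.inter_eq_right.mpr (cyl_anti hext)⟩
  · exact ⟨g1, Set.inter_eq_left.mpr (cyl_anti hext)⟩

lemma generateFrom_cylSets :
    (inferInstance : MeasurableSpace G.Run) = MeasurableSpace.generateFrom (cylSets G) := by
  refine le_antisymm ?_ (MeasurableSpace.generateFrom_le ?_)
  · have hfst : @Measurable G.Run G.S (MeasurableSpace.generateFrom (cylSets G)) _ Prod.fst := by
      refine @measurable_to_countable' G.S G.Run _ _
        (MeasurableSpace.generateFrom (cylSets G)) Prod.fst fun s => ?_
      have heq : (Prod.fst ⁻¹' {s} : Set G.Run) = cyl ((s, []) : G.History) := by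
        ext r
        simp [cyl]
      rw [heq]
      exact MeasurableSpace.measurableSet_generateFrom ⟨_, rfl⟩
    have hsnd : @Measurable G.Run (ℕ → G.ActionProfile × G.S)
        (MeasurableSpace.generateFrom (cylSets G)) _ Prod.snd := by
      refine (@measurable_pi_iff G.Run ℕ (fun _ => G.ActionProfile × G.S)
        (MeasurableSpace.generateFrom (cylSets G)) _ Prod.snd).mpr fun k => ?_
      refine @measurable_to_countable' (G.ActionProfile × G.S) G.Run _ _
        (MeasurableSpace.generateFrom (cylSets G)) _ fun c => ?_
      have heq : ((fun r : G.Run => r.2 k) ⁻¹' {c}) = {r : G.Run | r.2 k = c} := rfl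
      rw [heq, eval_preimage]
      exact MeasurableSet.iUnion fun s => MeasurableSet.iUnion fun v =>
        MeasurableSpace.measurableSet_generateFrom ⟨_, rfl⟩
    have hid : @Measurable G.Run G.Run (MeasurableSpace.generateFrom (cylSets G)) _ id :=
      hfst.prodMk hsnd
    intro t ht
    exact hid ht
  · rintro t ⟨g, rfl⟩
    exact cyl_measurable g

/-! ### Probabilities of cylinders -/

section Induced

variable {P : G.History → G.Profile → MeasureTheory.Measure G.Run}

lemma prob_cyl_self (hP : IsInducedFamily G P) (g : G.History) (σ : G.Profile) :
    P g σ (cyl g) = 1 := by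
  have h0 := hP.2 g σ []
  simpa [catH, contProb] using h0

lemma prob_cyl_of_ext (hP : IsInducedFamily G P) {h' g : G.History} (hext : Ext h' g)
    (σ : G.Profile) : P g σ (cyl h') = 1 := by
  haveI := hP.1 g σ
  refine le_antisymm prob_le_one ?_
  calc (1 : ℝ≥0∞) = P g σ (cyl g) := (prob_cyl_self hP g σ).symm
    _ ≤ P g σ (cyl h') := measure_mono (cyl_anti hext)

lemma prob_cyl_zero (hP : IsInducedFamily G P) {h' g : G.History}
    (h1 : ¬ Ext h' g) (h2 : ¬ Ext g h') (σ : G.Profile) : P g σ (cyl h') = 0 := by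
  haveI := hP.1 g σ
  have hdisj : cyl h' ⊆ (cyl g)ᶜ := by
    intro r hr hrg
    rcases ext_or_ext_of_mem_cyl hr hrg with hx | hx
    · exact h1 hx
    · exact h2 hx
  have hcompl : P g σ (cyl g)ᶜ = 0 := by
    rw [measure_compl (cyl_measurable g) (measure_ne_top _ _), prob_cyl_self hP g σ,
      measure_univ, tsub_self]
  exact le_antisymm (le_trans (measure_mono hdisj) hcompl.le) zero_le

end Induced

/-! ### The one-step weights -/

/-- The one-step transition weight from `h` through the pair `(a, s)`. -/
noncomputable def stepW (σ : G.Profile) (h : G.History) (as : G.ActionProfile × G.S) : ℝ≥0∞ :=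
  (∏ j, σ j h (as.1 j)) * G.trans (lastState h) as.1 as.2

lemma tsum_prod_pmf (x : ∀ j, PMF (G.A j)) :
    ∑' a : G.ActionProfile, ∏ j, x j (a j) = 1 := by
  rw [tsum_fintype]
  have h1 := Finset.prod_univ_sum (fun j : G.I => (Finset.univ : Finset (G.A j)))
    (fun j b => x j b)
  rw [Fintype.piFinset_univ] at h1
  rw [← h1]
  refine Finset.prod_eq_one fun j _ => ?_
  rw [← tsum_fintype (L := .unconditional _)]
  exact (x j).tsum_coe

lemma stepW_total (σ : G.Profile) (h : G.History) :
    ∑' as : G.ActionProfile × G.S, stepW σ h as = 1 := by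
  calc ∑' as : G.ActionProfile × G.S, stepW σ h as
      = ∑' (a : G.ActionProfile) (s : G.S),
          (∏ j, σ j h (a j)) * G.trans (lastState h) a s := by
        simp only [stepW]
        exact ENNReal.tsum_prod
          (f := fun a s => (∏ j, σ j h (a j)) * G.trans (lastState h) a s)
    _ = ∑' a : G.ActionProfile, ∏ j, σ j h (a j) := by
        refine tsum_congr fun a => ?_
        rw [ENNReal.tsum_mul_left, PMF.tsum_coe, mul_one]
    _ = 1 := tsum_prod_pmf _

/-! ### Decomposition of the induced measure over the first step -/

lemma measure_decomp {P : G.History → G.Profile → MeasureTheory.Measure G.Run}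
    (hP : IsInducedFamily G P) (h : G.History) (σ : G.Profile) :
    P h σ = MeasureTheory.Measure.sum
      (fun as : G.ActionProfile × G.S => stepW σ h as • P (snocH h as.1 as.2) σ) := by
  set μ := MeasureTheory.Measure.sum
    (fun as : G.ActionProfile × G.S => stepW σ h as • P (snocH h as.1 as.2) σ) with hμ
  have hμapp : ∀ t : Set G.Run, MeasurableSet t →
      μ t = ∑' as : G.ActionProfile × G.S, stepW σ h as * P (snocH h as.1 as.2) σ t := by
    intro t ht
    rw [hμ, MeasureTheory.Measure.sum_apply _ ht]
    simp [MeasureTheory.Measure.smul_apply, smul_eq_mul]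
  have huniv : μ Set.univ = 1 := by
    rw [hμapp _ MeasurableSet.univ]
    have h1 : ∀ as : G.ActionProfile × G.S, P (snocH h as.1 as.2) σ Set.univ = 1 :=
      fun as => (hP.1 _ σ).measure_univ
    simp only [h1, mul_one]
    exact stepW_total σ h
  haveI : MeasureTheory.IsFiniteMeasure μ := ⟨by rw [huniv]; exact ENNReal.one_lt_top⟩
  refine (MeasureTheory.ext_of_generate_finite (cylSets G) generateFrom_cylSets
    isPiSystem_cylSets ?_ ?_).symm
  · rintro t ⟨g, rfl⟩
    rw [hμapp _ (cyl_measurable g)]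
    by_cases hgh : Ext g h
    · have h1 : ∀ as : G.ActionProfile × G.S, P (snocH h as.1 as.2) σ (cyl g) = 1 :=
        fun as => prob_cyl_of_ext hP (ext_trans hgh (ext_snocH h as.1 as.2)) σ
      rw [prob_cyl_of_ext hP hgh σ]
      simp only [h1, mul_one]
      exact stepW_total σ h
    · by_cases hhg : Ext h g
      · obtain ⟨l, hl⟩ := hhg.2
        cases l with
        | nil =>
          exfalso
          apply hgh
          have hgE : g = h := Prod.ext_iff.mpr ⟨hhg.1.symm, by rw [← hl, List.append_nil]⟩
          rw [hgE]
          exact ext_refl h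
        | cons as0 l' =>
          obtain ⟨a0, s0⟩ := as0
          have hg_eq2 : g = catH h ((a0, s0) :: l') := Prod.ext_iff.mpr ⟨hhg.1.symm, hl.symm⟩
          have hg_eq : g = catH (snocH h a0 s0) l' := by
            refine Prod.ext_iff.mpr ⟨hhg.1.symm, ?_⟩
            show g.2 = (h.2 ++ [(a0, s0)]) ++ l'
            rw [← hl, List.append_assoc, List.singleton_append]
          have hzero : ∀ as : G.ActionProfile × G.S, as ≠ (a0, s0) →
              stepW σ h as * P (snocH h as.1 as.2) σ (cyl g) = 0 := by
            intro as hne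
            rw [prob_cyl_zero hP ?_ ?_ σ, mul_zero]
            · rintro ⟨he1, he2⟩
              rw [← hl] at he2
              have : ((a0, s0) :: l' : List (G.ActionProfile × G.S)) <+: [(as.1, as.2)] := by
                rw [show (snocH h as.1 as.2).2 = h.2 ++ [(as.1, as.2)] from rfl,
                  List.prefix_append_right_inj] at he2
                exact he2
              rw [List.cons_prefix_cons] at this
              exact hne (Prod.ext_iff.mpr ⟨congrArg Prod.fst this.1.symm,
                congrArg Prod.snd this.1.symm⟩)
            · rintro ⟨he1, he2⟩
              rw [← hl] at he2
              have : ([(as.1, as.2)] : List (G.ActionProfile × G.S)) <+: (a0, s0) :: l' := by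
                rw [show (snocH h as.1 as.2).2 = h.2 ++ [(as.1, as.2)] from rfl,
                  List.prefix_append_right_inj] at he2
                exact he2
              rw [List.cons_prefix_cons] at this
              exact hne (Prod.ext_iff.mpr ⟨congrArg Prod.fst this.1,
                congrArg Prod.snd this.1⟩)
          calc ∑' as : G.ActionProfile × G.S,
                stepW σ h as * P (snocH h as.1 as.2) σ (cyl g)
              = stepW σ h (a0, s0) * P (snocH h a0 s0) σ (cyl g) := tsum_eq_single _ hzero
            _ = stepW σ h (a0, s0) * contProb σ (snocH h a0 s0) l' := by
                rw [hg_eq, hP.2]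
            _ = contProb σ h ((a0, s0) :: l') := by
                simp [contProb, stepW, mul_assoc]
            _ = P h σ (cyl g) := by
                rw [hg_eq2, hP.2 h σ ((a0, s0) :: l')]
      · have hzero : ∀ as : G.ActionProfile × G.S,
            stepW σ h as * P (snocH h as.1 as.2) σ (cyl g) = 0 := by
          intro as
          rw [prob_cyl_zero hP ?_ ?_ σ, mul_zero]
          · rintro ⟨he1, he2⟩
            rcases List.prefix_or_prefix_of_prefix he2
                (List.prefix_append h.2 [(as.1, as.2)]) with hp | hp
            · exact hgh ⟨he1, hp⟩
            · exact hhg ⟨he1.symm, hp⟩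
          · intro hext
            exact hhg (ext_trans (ext_snocH h as.1 as.2) hext)
        rw [prob_cyl_zero hP hgh hhg σ]
        simp only [hzero]
        exact tsum_zero
  · rw [huniv]
    exact ((hP.1 h σ).measure_univ).symm

/-! ### Real-valued summation facts -/

lemma tsum_trans_toReal (c : G.S) (a : G.ActionProfile) :
    ∑' s, (G.trans c a s).toReal = 1 := by
  rw [← ENNReal.tsum_toReal_eq fun s => PMF.apply_ne_top _ _, PMF.tsum_coe, ENNReal.toReal_one]

lemma summable_trans_toReal (c : G.S) (a : G.ActionProfile) :
    Summable fun s => (G.trans c a s).toReal :=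
  ENNReal.summable_toReal (by rw [PMF.tsum_coe]; exact ENNReal.one_ne_top)

lemma summable_trans_mul (c : G.S) (a : G.ActionProfile) (g : G.S → ℝ) (M : ℝ)
    (hg : ∀ s, G.trans c a s ≠ 0 → |g s| ≤ M) :
    Summable fun s => (G.trans c a s).toReal * g s := by
  refine Summable.of_norm_bounded (g := fun s => (G.trans c a s).toReal * max M 0)
    ((summable_trans_toReal c a).mul_right _) fun s => ?_
  rcases eq_or_ne (G.trans c a s) 0 with h0 | h0
  · simp [h0, le_max_right]
  · rw [Real.norm_eq_abs, abs_mul, abs_of_nonneg ENNReal.toReal_nonneg]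
    exact mul_le_mul_of_nonneg_left ((hg s h0).trans (le_max_left _ _)) ENNReal.toReal_nonneg

lemma sum_prod_toReal (x : ∀ j, PMF (G.A j)) :
    ∑ a : G.ActionProfile, ∏ j, (x j (a j)).toReal = 1 := by
  have h1 := Finset.prod_univ_sum (fun j : G.I => (Finset.univ : Finset (G.A j)))
    (fun j b => (x j b).toReal)
  rw [Fintype.piFinset_univ] at h1
  rw [← h1]
  refine Finset.prod_eq_one fun j _ => ?_
  rw [← tsum_fintype (L := .unconditional _), ← ENNReal.tsum_toReal_eq fun b => PMF.apply_ne_top _ _,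
    PMF.tsum_coe, ENNReal.toReal_one]

lemma abs_tsum_trans_mul_le {c : G.S} {a : G.ActionProfile} {g : G.S → ℝ} {M : ℝ}
    (hM : 0 ≤ M) (hg : ∀ s, G.trans c a s ≠ 0 → |g s| ≤ M) :
    |∑' s, (G.trans c a s).toReal * g s| ≤ M := by
  have hsum := summable_trans_mul c a g M hg
  rw [← Real.norm_eq_abs]
  refine le_trans (norm_tsum_le_tsum_norm hsum.norm) ?_
  have hle : ∀ s, ‖(G.trans c a s).toReal * g s‖ ≤ (G.trans c a s).toReal * M := by
    intro s
    rcases eq_or_ne (G.trans c a s) 0 with h0 | h0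
    · simp [h0]
    · rw [Real.norm_eq_abs, abs_mul, abs_of_nonneg ENNReal.toReal_nonneg]
      exact mul_le_mul_of_nonneg_left (hg s h0) ENNReal.toReal_nonneg
  calc ∑' s, ‖(G.trans c a s).toReal * g s‖
      ≤ ∑' s, (G.trans c a s).toReal * M :=
        Summable.tsum_le_tsum hle hsum.norm ((summable_trans_toReal c a).mul_right _)
    _ = M := by rw [tsum_mul_right, tsum_trans_toReal, one_mul]

lemma abs_oneShotExp_le {Dv : G.History → ℝ} {C : ℝ} (hC : 0 ≤ C) (h : G.History)
    (x : ∀ j, PMF (G.A j))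
    (hD : ∀ a s, G.trans (lastState h) a s ≠ 0 → |Dv (snocH h a s)| ≤ C) :
    |oneShotExp Dv h x| ≤ C := by
  unfold oneShotExp
  calc |∑ a : G.ActionProfile, (∏ j, (x j (a j)).toReal) *
        ∑' s, (G.trans (lastState h) a s).toReal * Dv (snocH h a s)|
      ≤ ∑ a : G.ActionProfile, |(∏ j, (x j (a j)).toReal) *
        ∑' s, (G.trans (lastState h) a s).toReal * Dv (snocH h a s)| :=
        Finset.abs_sum_le_sum_abs _ _
    _ ≤ ∑ a : G.ActionProfile, (∏ j, (x j (a j)).toReal) * C := by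
        refine Finset.sum_le_sum fun a _ => ?_
        rw [abs_mul, abs_of_nonneg (Finset.prod_nonneg fun _ _ => ENNReal.toReal_nonneg)]
        exact mul_le_mul_of_nonneg_left (abs_tsum_trans_mul_le hC (hD a))
          (Finset.prod_nonneg fun _ _ => ENNReal.toReal_nonneg)
    _ = C := by rw [← Finset.sum_mul, sum_prod_toReal, one_mul]

lemma oneShotExp_le_add {D1 D2 : G.History → ℝ} {M1 M2 δ' : ℝ} (h : G.History)
    (x : ∀ j, PMF (G.A j)) (hδ : 0 ≤ δ')
    (hb1 : ∀ a s, G.trans (lastState h) a s ≠ 0 → |D1 (snocH h a s)| ≤ M1)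
    (hb2 : ∀ a s, G.trans (lastState h) a s ≠ 0 → |D2 (snocH h a s)| ≤ M2)
    (hle : ∀ a s, G.trans (lastState h) a s ≠ 0 → D1 (snocH h a s) ≤ D2 (snocH h a s) + δ') :
    oneShotExp D1 h x ≤ oneShotExp D2 h x + δ' := by
  unfold oneShotExp
  have H : ∀ a : G.ActionProfile,
      ∑' s, (G.trans (lastState h) a s).toReal * D1 (snocH h a s)
        ≤ (∑' s, (G.trans (lastState h) a s).toReal * D2 (snocH h a s)) + δ' := by
    intro a
    have hs1 := summable_trans_mul (lastState h) a _ M1 (hb1 a)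
    have hs2 := summable_trans_mul (lastState h) a _ M2 (hb2 a)
    have hs3 : Summable fun s => (G.trans (lastState h) a s).toReal * δ' :=
      (summable_trans_toReal _ _).mul_right _
    calc ∑' s, (G.trans (lastState h) a s).toReal * D1 (snocH h a s)
        ≤ ∑' s, ((G.trans (lastState h) a s).toReal * D2 (snocH h a s)
            + (G.trans (lastState h) a s).toReal * δ') := by
          refine Summable.tsum_le_tsum (fun s => ?_) hs1 (hs2.add hs3)
          rcases eq_or_ne (G.trans (lastState h) a s) 0 with h0 | h0
          · simp [h0]
          · have := hle a s h0
            nlinarith [ENNReal.toReal_nonneg (a := G.trans (lastState h) a s)]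
      _ = (∑' s, (G.trans (lastState h) a s).toReal * D2 (snocH h a s)) + δ' := by
          rw [Summable.tsum_add hs2 hs3, tsum_mul_right, tsum_trans_toReal, one_mul]
  calc ∑ a : G.ActionProfile, (∏ j, (x j (a j)).toReal) *
        ∑' s, (G.trans (lastState h) a s).toReal * D1 (snocH h a s)
      ≤ ∑ a : G.ActionProfile, (∏ j, (x j (a j)).toReal) *
        ((∑' s, (G.trans (lastState h) a s).toReal * D2 (snocH h a s)) + δ') := by
        refine Finset.sum_le_sum fun a _ => ?_
        exact mul_le_mul_of_nonneg_left (H a)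
          (Finset.prod_nonneg fun _ _ => ENNReal.toReal_nonneg)
    _ = (∑ a : G.ActionProfile, (∏ j, (x j (a j)).toReal) *
        ∑' s, (G.trans (lastState h) a s).toReal * D2 (snocH h a s)) + δ' := by
        rw [Finset.sum_congr rfl fun (a : G.ActionProfile) _ => mul_add
          (∏ j, (x j (a j)).toReal)
          (∑' s, (G.trans (lastState h) a s).toReal * D2 (snocH h a s)) δ',
          Finset.sum_add_distrib, ← Finset.sum_mul, sum_prod_toReal, one_mul]

/-! ### The tower property for expected payoffs -/

lemma abs_expPay_le {P : G.History → G.Profile → MeasureTheory.Measure G.Run}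
    (hP : IsInducedFamily G P) {i : G.I} {Cf : ℝ} (hCf : ∀ r, |G.payoff i r| ≤ Cf)
    (g : G.History) (σ : G.Profile) : |expPay P g σ i| ≤ Cf := by
  haveI := hP.1 g σ
  have hb := MeasureTheory.norm_integral_le_of_norm_le_const (μ := P g σ) (f := G.payoff i)
    (C := Cf) (Filter.Eventually.of_forall fun r => by rw [Real.norm_eq_abs]; exact hCf r)
  rw [Real.norm_eq_abs] at hb
  simpa [expPay, MeasureTheory.measure_univ] using hb

lemma expPay_decomp {P : G.History → G.Profile → MeasureTheory.Measure G.Run}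
    (hP : IsInducedFamily G P) {i : G.I} {Cf : ℝ} (hfm : Measurable (G.payoff i))
    (hfb : ∀ r, |G.payoff i r| ≤ Cf) (h : G.History) (σ : G.Profile) :
    expPay P h σ i = oneShotExp (fun g => expPay P g σ i) h (fun j => σ j h) := by
  haveI := hP.1 h σ
  have hint : MeasureTheory.Integrable (G.payoff i) (P h σ) :=
    (MeasureTheory.integrable_const Cf).mono' hfm.aestronglyMeasurable
      (Filter.Eventually.of_forall fun r => by rw [Real.norm_eq_abs]; exact hfb r)
  have hdec := measure_decomp hP h σ
  have h1 : expPay P h σ i = ∑' as : G.ActionProfile × G.S,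
      (stepW σ h as).toReal * expPay P (snocH h as.1 as.2) σ i := by
    rw [expPay, hdec, MeasureTheory.integral_sum_measure (hdec ▸ hint)]
    refine tsum_congr fun as => ?_
    rw [MeasureTheory.integral_smul_measure, smul_eq_mul, expPay]
  rw [h1]
  have hbE : ∀ g' : G.History, |expPay P g' σ i| ≤ Cf := fun g' => abs_expPay_le hP hfb g' σ
  have hw_summ : Summable fun as : G.ActionProfile × G.S => (stepW σ h as).toReal :=
    ENNReal.summable_toReal (by rw [stepW_total]; exact ENNReal.one_ne_top)
  have hsumm : Summable fun as : G.ActionProfile × G.S =>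
      (stepW σ h as).toReal * expPay P (snocH h as.1 as.2) σ i := by
    refine Summable.of_norm_bounded (g := fun as => (stepW σ h as).toReal * Cf)
      (hw_summ.mul_right _) fun as => ?_
    rw [Real.norm_eq_abs, abs_mul, abs_of_nonneg ENNReal.toReal_nonneg]
    exact mul_le_mul_of_nonneg_left (hbE _) ENNReal.toReal_nonneg
  rw [Summable.tsum_prod' hsumm (fun a => hsumm.prod_factor a)]
  unfold oneShotExp
  rw [tsum_fintype]
  refine Finset.sum_congr rfl fun a _ => ?_
  rw [← tsum_mul_left]
  refine tsum_congr fun s => ?_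
  rw [stepW, ENNReal.toReal_mul, ENNReal.toReal_prod, mul_assoc]

end StochGame
namespace StochGame

/-- **Theorem (one-stage deviations followed by punishment at the minmax level).**
Let `δ > 0`, let `D_i` be a Martin function for the minmax value for each player `i`, and
let `σ*` play a Nash equilibrium of the one-shot game `G_O(D,h)` at every history `h`.
Then for every history `h`, every player `i` and every action `a_i` of player `i`:
`Σ_{a_{-i}} σ*_{-i}(a_{-i}|h) Σ_s p(s | s_h, a_i, a_{-i}) v̄_i(h,(a_i,a_{-i}),s)
  ≤ E_{h,σ*}[f_i] + 2δ`. -/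
theorem one_stage_deviation_bound (G : StochGame)
    (P : G.History → G.Profile → Measure G.Run) (hP : IsInducedFamily G P)
    (hfm : ∀ i, Measurable (G.payoff i))
    (hfb : ∀ i, ∃ C : ℝ, ∀ r : G.Run, |G.payoff i r| ≤ C)
    (δ : ℝ) (hδ : 0 < δ)
    (D : G.I → G.History → ℝ) (hD : ∀ i, IsMartinMinmax P δ i (D i))
    (σstar : G.Profile)
    (hσstar : ∀ h : G.History, Valid h → OneShotNash D h (fun j => σstar j h))
    (h : G.History) (hv : Valid h) (i : G.I) (ai : G.A i) :
    (∑ a : G.ActionProfile, if a i = ai then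
        (∏ j ∈ Finset.univ.erase i, (σstar j h (a j)).toReal) *
          ∑' s : G.S, (G.trans (lastState h) a s).toReal * minmaxVal P i (snocH h a s)
      else 0)
      ≤ expPay P h σstar i + 2 * δ := by
  classical
  obtain ⟨C, hC⟩ := (hD i).1
  have hC0 : 0 ≤ C := le_trans (abs_nonneg _) (hC h)
  obtain ⟨Cf, hCf⟩ := hfb i
  -- a uniform bound on one-shot expectations of the Martin function
  have hosb : ∀ (g : G.History) (x : ∀ j, PMF (G.A j)), |oneShotExp (D i) g x| ≤ C :=
    fun g x => abs_oneShotExp_le hC0 g x (fun a s _ => hC _)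
  -- at every valid history the one-shot minmax is at most the Nash payoff of `σstar`
  have S3 : ∀ g : G.History, Valid g →
      oneShotMinmax (D i) i g ≤ oneShotExp (D i) g (fun j => σstar j g) := by
    intro g hg
    have hBddA : ∀ x : ∀ j, PMF (G.A j), BddAbove (Set.range fun y : PMF (G.A i) =>
        oneShotExp (D i) g (Function.update x i y)) := fun x =>
      ⟨C, by rintro _ ⟨y, rfl⟩; exact (abs_le.1 (hosb g _)).2⟩
    have hinf : oneShotMinmax (D i) i g ≤ ⨆ y : PMF (G.A i),
        oneShotExp (D i) g (Function.update (fun j => σstar j g) i y) := by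
      refine ciInf_le ⟨-C, ?_⟩ _
      rintro _ ⟨x, rfl⟩
      refine le_trans ?_ (le_ciSup (hBddA x) (x i))
      exact (abs_le.1 (hosb g _)).1
    exact hinf.trans (ciSup_le fun y => hσstar g hg i y)
  -- the Martin function is below the continuation payoff of `σstar`
  have S4 : ∀ g : G.History, Valid g → D i g ≤ expPay P g σstar i := by
    intro g hg
    refine le_trans ((hD i).2.2.1 g hg) ?_
    exact (hD i).2.2.2 g hg σstar (fun g' hg' _ => S3 g' hg') g hg (ext_refl g)
  -- rewrite the deviation payoff as a one-shot expectation
  have hLHS : (∑ a : G.ActionProfile, if a i = ai then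
        (∏ j ∈ Finset.univ.erase i, (σstar j h (a j)).toReal) *
          ∑' s : G.S, (G.trans (lastState h) a s).toReal * minmaxVal P i (snocH h a s)
      else 0)
      = oneShotExp (minmaxVal P i) h
          (Function.update (fun j => σstar j h) i (PMF.pure ai)) := by
    unfold oneShotExp
    refine Finset.sum_congr rfl fun a _ => ?_
    have hprod : ∏ j, ((Function.update (fun j => σstar j h) i (PMF.pure ai)) j (a j)).toReal
        = (if a i = ai then 1 else 0) *
          ∏ j ∈ Finset.univ.erase i, (σstar j h (a j)).toReal := by
      rw [← Finset.mul_prod_erase Finset.univ _ (Finset.mem_univ i)]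
      congr 1
      · rw [Function.update_self, PMF.pure_apply]
        split_ifs <;> simp
      · refine Finset.prod_congr rfl fun j hj => ?_
        rw [Function.update_of_ne (Finset.ne_of_mem_erase hj)]
    rw [hprod]
    split_ifs with hai
    · rw [one_mul]
    · rw [zero_mul, zero_mul]
  rw [hLHS]
  have hbound_minmax : ∀ (a : G.ActionProfile) (s : G.S), G.trans (lastState h) a s ≠ 0 →
      |minmaxVal P i (snocH h a s)| ≤ C + δ := by
    intro a s hs
    have hsand := (hD i).2.1 _ (valid_snocH hv hs)
    have hDb := abs_le.1 (hC (snocH h a s))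
    rw [abs_le]
    constructor <;> [linarith [hsand.1, hDb.1]; linarith [hsand.1, hDb.2]]
  have step1 : oneShotExp (minmaxVal P i) h
      (Function.update (fun j => σstar j h) i (PMF.pure ai))
      ≤ oneShotExp (D i) h (Function.update (fun j => σstar j h) i (PMF.pure ai)) + δ := by
    refine oneShotExp_le_add h _ hδ.le hbound_minmax (fun a s _ => hC _) ?_
    intro a s hs
    have hsand := (hD i).2.1 _ (valid_snocH hv hs)
    linarith [hsand.1]
  have step2 : oneShotExp (D i) h (Function.update (fun j => σstar j h) i (PMF.pure ai))
      ≤ oneShotExp (D i) h (fun j => σstar j h) := hσstar h hv i (PMF.pure ai)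
  have step3 : oneShotExp (D i) h (fun j => σstar j h)
      ≤ oneShotExp (fun g => expPay P g σstar i) h (fun j => σstar j h) + 0 := by
    refine oneShotExp_le_add h _ le_rfl (fun a s _ => hC _)
      (fun a s _ => abs_expPay_le hP hCf _ _) ?_
    intro a s hs
    rw [add_zero]
    exact S4 _ (valid_snocH hv hs)
  have step4 : oneShotExp (fun g => expPay P g σstar i) h (fun j => σstar j h)
      = expPay P h σstar i := (expPay_decomp hP (hfm i) hCf h σstar).symm
  linarith

end StochGame
end
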